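/- The class of strongly semisimple Hopf algebras is closed under Drinfeld twists: if H is a strongly semisimple Hopf algebra over a commutative ring R and J is a Drinfeld twist for H, then the twisted Hopf algebra H^J is strongly semisimple. -/

import Mathlib

open TensorProduct

noncomputable section

/-! ### Integrals in a Hopf algebra -/

/-- `t` is a left integral in `H`: `h * t = ε(h) • t` for all `h ∈ H`. -/
def IsLeftIntegral (R : Type*) {H : Type*} [CommRing R] [Ring H] [HopfAlgebra R H]
    (t : H) : Prop :=
  ∀ h : H, h * t = Coalgebra.counit (R := R) h • t

/-- `t` is a right integral in `H`: `t * h = ε(h) • t` for all `h ∈ H`. -/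
def IsRightIntegral (R : Type*) {H : Type*} [CommRing R] [Ring H] [HopfAlgebra R H]
    (t : H) : Prop :=
  ∀ h : H, t * h = Coalgebra.counit (R := R) h • t

/-! ### Module algebras -/

variable (R H A : Type*)

/-- Given an `H`-action `ρ` on `A` (an `R`-algebra map `H → End_R A`),
`pairAction ρ w` is the operator on `A ⊗ A` given, for `w = Σ x ⊗ y`, by
`a ⊗ b ↦ Σ (x • a) ⊗ (y • b)`. -/
def pairAction [CommRing R] [Ring H] [HopfAlgebra R H] [Ring A] [Algebra R A]
    (ρ : H →ₐ[R] Module.End R A) :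
    H ⊗[R] H →ₗ[R] A ⊗[R] A →ₗ[R] A ⊗[R] A :=
  (TensorProduct.homTensorHomMap (RingHom.id R) A A A A) ∘ₗ
    (TensorProduct.map ρ.toLinearMap ρ.toLinearMap)

/-- A left `H`-module algebra structure on an `R`-algebra `A`: an `H`-module structure
(an `R`-algebra map `ρ : H → End_R A`) such that multiplication and unit of `A` are
morphisms of `H`-modules, i.e. `h • (a b) = Σ_(h) (h₁ • a)(h₂ • b)` and `h • 1 = ε(h) 1`;
in other words, `A` is an `R`-algebra in the category of left `H`-modules. -/
structure ModuleAlgebra [CommRing R] [Ring H] [HopfAlgebra R H] [Ring A] [Algebra R A] where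
  ρ : H →ₐ[R] Module.End R A
  act_mul : ∀ (h : H) (a b : A),
    ρ h (a * b) = LinearMap.mul' R A (pairAction R H A ρ (Coalgebra.comul h) (a ⊗ₜ[R] b))
  act_one : ∀ h : H, ρ h 1 = algebraMap R A (Coalgebra.counit h)

variable {R H A}

/-- The set of `H`-invariant elements `A^H = {a | h • a = ε(h) a}` of a module algebra. -/
def ModuleAlgebra.invariants [CommRing R] [Ring H] [HopfAlgebra R H] [Ring A] [Algebra R A]
    (ma : ModuleAlgebra R H A) : Set A :=
  {a : A | ∀ h : H, ma.ρ h a = Coalgebra.counit (R := R) h • a}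

/-- The set of central `H`-invariant elements `Z(A)^H` of a module algebra. -/
def ModuleAlgebra.centralInvariants [CommRing R] [Ring H] [HopfAlgebra R H] [Ring A]
    [Algebra R A] (ma : ModuleAlgebra R H A) : Set A :=
  {a : A | (∀ b : A, a * b = b * a) ∧ ∀ h : H, ma.ρ h a = Coalgebra.counit (R := R) h • a}

/-- A subset `I ⊆ A` is `H`-stable if it is closed under the `H`-action. -/
def IsHStable [CommRing R] [Ring H] [HopfAlgebra R H] [Ring A] [Algebra R A]
    (ma : ModuleAlgebra R H A) (I : Set A) : Prop :=
  ∀ h : H, ∀ x ∈ I, ma.ρ h x ∈ I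

variable (R H A)

/-- `B` realises the smash product `A # H` of a left `H`-module algebra `A` with `H`:
`B` contains `A` and `H` as subalgebras, the multiplication map `A ⊗_R H → B`,
`a ⊗ h ↦ a·h` is an `R`-module isomorphism (so `B = A ⊗_R H` as `R`-module), and
`(1 # h)(a # 1) = Σ_(h) (h₁ • a) # h₂` holds, which forces the smash product
multiplication `(a # h)(b # g) = Σ_(h) a (h₁ • b) # h₂ g`. -/
structure SmashProductStructure [CommRing R] [Ring H] [HopfAlgebra R H] [Ring A] [Algebra R A]
    (ma : ModuleAlgebra R H A) (B : Type*) [Ring B] [Algebra R B] where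
  ιA : A →ₐ[R] B
  ιH : H →ₐ[R] B
  mul_bij : Function.Bijective
    ((LinearMap.mul' R B) ∘ₗ (TensorProduct.map ιA.toLinearMap ιH.toLinearMap))
  commute_rel : ∀ (h : H) (a : A),
    ιH h * ιA a =
      LinearMap.mul' R B
        ((TensorProduct.map (ιA.toLinearMap ∘ₗ ((LinearMap.flip ma.ρ.toLinearMap) a))
          ιH.toLinearMap) (Coalgebra.comul h))

variable {R H A}

/-! ### Ideals and semiprimeness -/

/-- The ordered product `a₁ ⋯ aₙ` of a nonempty family of ring elements,
relative to a multiplication `μ`. -/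
def nProd {A : Type*} (μ : A → A → A) : A → List A → A
  | a, [] => a
  | a, b :: l => μ a (nProd μ b l)

/-- `I` is a two-sided ideal of `A` (described as a set). -/
def IsIdealSet (A : Type*) [Ring A] (I : Set A) : Prop :=
  (0 : A) ∈ I ∧ (∀ x ∈ I, ∀ y ∈ I, x + y ∈ I) ∧
    ∀ a : A, ∀ x ∈ I, a * x ∈ I ∧ x * a ∈ I

/-- `I` is a two-sided ideal with respect to a (possibly twisted) multiplication `μ`. -/
def IsIdealSetMul {A : Type*} [Ring A] (μ : A → A → A) (I : Set A) : Prop :=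
  (0 : A) ∈ I ∧ (∀ x ∈ I, ∀ y ∈ I, x + y ∈ I) ∧
    ∀ a : A, ∀ x ∈ I, μ a x ∈ I ∧ μ x a ∈ I

/-- `I` is a nilpotent ideal with respect to the multiplication `μ`: some power `Iⁿ`
vanishes, i.e. all products of `n + 1` elements of `I` are zero. -/
def IsNilpotentMulSet {A : Type*} [Zero A] (μ : A → A → A) (I : Set A) : Prop :=
  ∃ n : ℕ, ∀ f : Fin (n + 1) → A, (∀ i, f i ∈ I) →
    nProd μ (f 0) (List.ofFn fun i : Fin n => f i.succ) = 0

/-- A ring is semiprime if it has no nonzero nilpotent two-sided ideal. -/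
def RingIsSemiprime (A : Type*) [Ring A] : Prop :=
  ∀ I : Set A, IsIdealSet A I → IsNilpotentMulSet (· * ·) I → I ⊆ {0}

/-- A module algebra is `H`-semiprime if it has no nonzero nilpotent `H`-stable
two-sided ideal. -/
def IsHSemiprime [CommRing R] [Ring H] [HopfAlgebra R H] [Ring A] [Algebra R A]
    (ma : ModuleAlgebra R H A) : Prop :=
  ∀ I : Set A, IsIdealSet A I → IsHStable ma I → IsNilpotentMulSet (· * ·) I → I ⊆ {0}

/-! ### Drinfeld twists, triangularity, cosemisimplicity, strong semisimplicity -/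

variable (R H : Type*)

/-- `J ∈ H ⊗ H` is a Drinfeld twist for `H`: it is invertible and satisfies
`(J ⊗ 1)(Δ ⊗ 1)(J) = (1 ⊗ J)(1 ⊗ Δ)(J)` and `(ε ⊗ 1)(J) = 1 = (1 ⊗ ε)(J)`. -/
def IsDrinfeldTwist [CommRing R] [Ring H] [HopfAlgebra R H] (J : H ⊗[R] H) : Prop :=
  IsUnit J ∧
  ((Algebra.TensorProduct.includeLeft (R := R) (S := R) (A := H ⊗[R] H) (B := H)) J) *
      (LinearMap.rTensor H (Coalgebra.comul (R := R)) J) =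
    ((Algebra.TensorProduct.assoc R R R H H H).symm
        ((Algebra.TensorProduct.includeRight (R := R) (A := H) (B := H ⊗[R] H)) J)) *
      ((Algebra.TensorProduct.assoc R R R H H H).symm
        (LinearMap.lTensor H (Coalgebra.comul (R := R)) J)) ∧
  TensorProduct.lid R H (LinearMap.rTensor H (Coalgebra.counit (R := R)) J) = 1 ∧
  TensorProduct.rid R H (LinearMap.lTensor H (Coalgebra.counit (R := R)) J) = 1

/-- `r ∈ H ⊗ H` is a triangular structure on `H`: an invertible element with
`(Δ ⊗ 1)(r) = r₁₃ r₂₃`, `(1 ⊗ Δ)(r) = r₁₃ r₁₂`, `Δ^cop = r Δ r⁻¹` and `r⁻¹ = τ(r)`. -/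
def IsTriangularStructure [CommRing R] [Ring H] [HopfAlgebra R H] (r : H ⊗[R] H) : Prop :=
  IsUnit r ∧
  LinearMap.rTensor H (Coalgebra.comul (R := R)) r =
    ((TensorProduct.map (Algebra.TensorProduct.includeLeft
        (R := R) (S := R) (A := H) (B := H)).toLinearMap LinearMap.id) r) *
      ((TensorProduct.map (Algebra.TensorProduct.includeRight
        (R := R) (A := H) (B := H)).toLinearMap LinearMap.id) r) ∧
  (TensorProduct.assoc R H H H).symm (LinearMap.lTensor H (Coalgebra.comul (R := R)) r) =
    ((TensorProduct.map (Algebra.TensorProduct.includeLeft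
        (R := R) (S := R) (A := H) (B := H)).toLinearMap LinearMap.id) r) *
      ((Algebra.TensorProduct.includeLeft (R := R) (S := R) (A := H ⊗[R] H) (B := H)) r) ∧
  (∀ h : H, (TensorProduct.comm R H H) (Coalgebra.comul (R := R) h) * r =
      r * Coalgebra.comul (R := R) h) ∧
  (TensorProduct.comm R H H r) * r = 1 ∧ r * (TensorProduct.comm R H H r) = 1

/-- A Hopf algebra over a field is cosemisimple (its dual coalgebra structure is
cosemisimple) iff it admits a normalized (left or right) integral `λ : H → k` on `H`. -/
def IsCosemisimpleHopf (k H : Type*) [Field k] [Ring H] [HopfAlgebra k H] : Prop :=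
  ∃ lam : H →ₗ[k] k, lam 1 = 1 ∧
    ((∀ h : H, TensorProduct.lid k H (LinearMap.rTensor H lam (Coalgebra.comul (R := k) h)) =
        lam h • (1 : H)) ∨
     (∀ h : H, TensorProduct.rid k H (LinearMap.lTensor H lam (Coalgebra.comul (R := k) h)) =
        lam h • (1 : H)))

universe ua ub

/-- A Hopf algebra `H` is strongly semisimple if for every `H`-semiprime left
`H`-module algebra `A` the smash product `A # H` is semiprime. -/
def StronglySemisimple [CommRing R] [Ring H] [HopfAlgebra R H] : Prop :=
  ∀ (A : Type ua) [Ring A] [Algebra R A] (ma : ModuleAlgebra R H A), IsHSemiprime ma →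
    ∀ (B : Type ub) [Ring B] [Algebra R B],
      SmashProductStructure R H A ma B → RingIsSemiprime B

variable {R H}

section Aux

open TensorProduct LinearMap

variable {R H A B : Type*} [CommRing R] [Ring H] [HopfAlgebra R H]
  [Ring A] [Algebra R A] [Ring B] [Algebra R B]

theorem pairAction_tmul (ρ : H →ₐ[R] Module.End R A) (u v : H) :
    pairAction R H A ρ (u ⊗ₜ[R] v) = TensorProduct.map (ρ u) (ρ v) := by
  simp [pairAction]

theorem pairAction_one (ρ : H →ₐ[R] Module.End R A) :
    pairAction R H A ρ 1 = LinearMap.id := by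
  rw [Algebra.TensorProduct.one_def, pairAction_tmul]
  simp [TensorProduct.map_id, Module.End.one_eq_id]

theorem pairAction_mul (ρ : H →ₐ[R] Module.End R A) (X Y : H ⊗[R] H) :
    pairAction R H A ρ (X * Y) = pairAction R H A ρ X ∘ₗ pairAction R H A ρ Y := by
  induction X using TensorProduct.induction_on with
  | zero => simp
  | add X₁ X₂ h1 h2 =>
    rw [add_mul, map_add, map_add, h1, h2]; ext z; simp
  | tmul u v =>
    induction Y using TensorProduct.induction_on with
    | zero => simp
    | add Y₁ Y₂ h1 h2 => rw [mul_add, map_add, map_add, h1, h2]; ext z; simp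
    | tmul u' v' =>
      rw [Algebra.TensorProduct.tmul_mul_tmul, pairAction_tmul, pairAction_tmul,
        pairAction_tmul, map_mul, map_mul, Module.End.mul_eq_comp, Module.End.mul_eq_comp,
        TensorProduct.map_comp]

/-- The first tensor factor action of `H` on `A ⊗ H`. -/
def thetaAux1 (ρ : H →ₐ[R] Module.End R A) : H →ₐ[R] Module.End R (A ⊗[R] H) :=
  AlgHom.ofLinearMap ((LinearMap.rTensorHom (R := R) (N := A) (P := A) H) ∘ₗ ρ.toLinearMap)
    (by ext a h; simp [LinearMap.rTensorHom])
    (by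
      intro x y
      simp only [LinearMap.coe_comp, Function.comp_apply, AlgHom.toLinearMap_apply, map_mul]
      ext a h
      simp [LinearMap.rTensorHom, Module.End.mul_eq_comp])

/-- The second tensor factor regular action of `H` on `A ⊗ H`. -/
def thetaAux2 (R A : Type*) {H : Type*} [CommRing R] [Ring H] [Algebra R H]
    [Ring A] [Algebra R A] : H →ₐ[R] Module.End R (A ⊗[R] H) :=
  AlgHom.ofLinearMap
    ((LinearMap.lTensorHom (R := R) (N := H) (P := H) A) ∘ₗ (Algebra.lmul R H).toLinearMap)
    (by simp [LinearMap.lTensorHom]; ext a h; simp)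
    (by
      intro x y
      simp only [LinearMap.coe_comp, Function.comp_apply, AlgHom.toLinearMap_apply, map_mul]
      ext a h
      simp [LinearMap.lTensorHom, Module.End.mul_eq_comp, mul_assoc])

/-- The action of `H ⊗ H` on `A ⊗ H` through `ρ` on the first factor and left
multiplication on the second. -/
def theta (ρ : H →ₐ[R] Module.End R A) : H ⊗[R] H →ₐ[R] Module.End R (A ⊗[R] H) :=
  Algebra.TensorProduct.lift (thetaAux1 ρ) (thetaAux2 R A) (by
    intro u v
    show _ = _
    ext a h
    simp [thetaAux1, thetaAux2, Module.End.mul_eq_comp, LinearMap.rTensorHom,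
      LinearMap.lTensorHom])

theorem theta_tmul_apply (ρ : H →ₐ[R] Module.End R A) (u v : H) (a : A) (h : H) :
    theta ρ (u ⊗ₜ[R] v) (a ⊗ₜ[R] h) = ρ u a ⊗ₜ[R] (v * h) := by
  simp [theta, Algebra.TensorProduct.lift_tmul, thetaAux1, thetaAux2,
    Module.End.mul_eq_comp, LinearMap.rTensorHom, LinearMap.lTensorHom]

end Aux


section Aux2

open TensorProduct LinearMap

variable {R H A : Type*} [CommRing R] [Ring H] [HopfAlgebra R H]
  [Ring A] [Algebra R A]

theorem pair_mem (ρ : H →ₐ[R] Module.End R A) (g : A ⊗[R] A →ₗ[R] A) (S : Set A)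
    (h0 : (0 : A) ∈ S) (hadd : ∀ x ∈ S, ∀ y ∈ S, x + y ∈ S) (x y : A)
    (hs : ∀ u v : H, g (ρ u x ⊗ₜ[R] ρ v y) ∈ S) (X : H ⊗[R] H) :
    g (pairAction R H A ρ X (x ⊗ₜ[R] y)) ∈ S := by
  induction X using TensorProduct.induction_on with
  | zero => simpa using h0
  | tmul u v => simpa [pairAction_tmul] using hs u v
  | add X Y hX hY =>
    rw [map_add, LinearMap.add_apply, map_add]
    exact hadd _ hX _ hY

variable (μ : A → A → A) (I : Set A)

/-- `chainJ μ I m` is (the additive span of) the set of `μ`-products of `m + 1`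
elements of `I`. -/
def chainJ : ℕ → AddSubmonoid A
  | 0 => AddSubmonoid.closure I
  | (m + 1) => AddSubmonoid.closure {z | ∃ x ∈ I, ∃ y ∈ chainJ m, z = μ x y}

section chain

variable (ρ : H →ₐ[R] Module.End R A) (g : A ⊗[R] A →ₗ[R] A) (Q : H ⊗[R] H)
  (hμ : ∀ x y : A, μ x y = g (x ⊗ₜ[R] y))
  (hstab : ∀ h : H, ∀ x ∈ I, ρ h x ∈ I)
  (hkey : ∀ (h : H) (x y : A),
    ρ h (μ x y) = g (pairAction R H A ρ (Coalgebra.comul (R := R) h) (x ⊗ₜ[R] y)))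
  (hmul : ∀ x y : A, x * y = g (pairAction R H A ρ Q (x ⊗ₜ[R] y)))

include hμ hstab hkey in
theorem chainJ_stable : ∀ (m : ℕ) (h : H), ∀ z ∈ chainJ μ I m, ρ h z ∈ chainJ μ I m := by
  intro m
  induction m with
  | zero =>
    intro h z hz
    induction hz using AddSubmonoid.closure_induction with
    | mem w hw => exact AddSubmonoid.subset_closure (hstab h w hw)
    | zero => simpa using (chainJ μ I 0).zero_mem
    | add a b _ _ ha hb => simpa using (chainJ μ I 0).add_mem ha hb
  | succ m ih =>
    intro h z hz
    induction hz using AddSubmonoid.closure_induction with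
    | mem w hw =>
      obtain ⟨x, hx, y, hy, rfl⟩ := hw
      rw [hkey]
      refine pair_mem ρ g _ (chainJ μ I (m+1)).zero_mem
        (fun a ha b hb => (chainJ μ I (m+1)).add_mem ha hb) x y (fun u v => ?_) _
      rw [← hμ]
      exact AddSubmonoid.subset_closure ⟨ρ u x, hstab u x hx, ρ v y, ih v y hy, rfl⟩
    | zero => simpa using (chainJ μ I (m+1)).zero_mem
    | add a b _ _ ha hb => simpa using (chainJ μ I (m+1)).add_mem ha hb

include hμ hstab hkey hmul in
theorem mul_mem_chainJ : ∀ (m : ℕ) (x : A), x ∈ I → ∀ y ∈ chainJ μ I m,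
    x * y ∈ chainJ μ I (m + 1) := by
  intro m x hx y hy
  rw [hmul]
  refine pair_mem ρ g _ (chainJ μ I (m+1)).zero_mem
    (fun a ha b hb => (chainJ μ I (m+1)).add_mem ha hb) x y (fun u v => ?_) _
  rw [← hμ]
  exact AddSubmonoid.subset_closure
    ⟨ρ u x, hstab u x hx, ρ v y, chainJ_stable μ I ρ g hμ hstab hkey m v y hy, rfl⟩

include hμ hstab hkey hmul in
theorem nProd_mem_chainJ : ∀ (m : ℕ) (f : Fin (m + 1) → A), (∀ i, f i ∈ I) →
    nProd (· * ·) (f 0) (List.ofFn fun i : Fin m => f i.succ) ∈ chainJ μ I m := by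
  intro m
  induction m with
  | zero =>
    intro f hf
    simpa [nProd, chainJ] using AddSubmonoid.subset_closure (hf 0)
  | succ m ih =>
    intro f hf
    rw [List.ofFn_succ]
    show f 0 * nProd (· * ·) (f (0 : Fin (m+1)).succ)
      (List.ofFn fun i : Fin m => f i.succ.succ) ∈ _
    exact mul_mem_chainJ μ I ρ g Q hμ hstab hkey hmul m (f 0) (hf 0) _
      (ih (fun i => f i.succ) (fun i => hf i.succ))

include hμ in
theorem chainJ_le_products : ∀ m : ℕ, (chainJ μ I m : Set A) ⊆
    (AddSubmonoid.closure {w : A | ∃ f : Fin (m + 1) → A, (∀ i, f i ∈ I) ∧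
      w = nProd μ (f 0) (List.ofFn fun i : Fin m => f i.succ)} : Set A) := by
  intro m
  induction m with
  | zero =>
    apply AddSubmonoid.closure_le.2
    intro x hx
    exact AddSubmonoid.subset_closure ⟨fun _ => x, fun _ => hx, rfl⟩
  | succ m ih =>
    apply AddSubmonoid.closure_le.2
    rintro z ⟨x, hx, y, hy, rfl⟩
    have hy' := ih hy
    clear hy
    induction hy' using AddSubmonoid.closure_induction with
    | mem w hw =>
      obtain ⟨f, hf, rfl⟩ := hw
      refine AddSubmonoid.subset_closure ⟨(Fin.cons x f : Fin (m + 2) → A), ?_, ?_⟩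
      · intro i
        refine Fin.cases ?_ ?_ i
        · simpa using hx
        · intro j; simpa using hf j
      · have h1 : (List.ofFn fun i : Fin (m + 1) => (Fin.cons x f : Fin (m + 2) → A) i.succ) = List.ofFn f := by
          simp
        rw [h1, List.ofFn_succ]
        show μ x (nProd μ (f 0) (List.ofFn fun i : Fin m => f i.succ)) = _
        simp [nProd]
    | zero =>
      have : μ x 0 = 0 := by rw [hμ]; simp
      simpa [this] using (AddSubmonoid.closure _).zero_mem
    | add a b ha' hb' ha hb =>
      have : μ x (a + b) = μ x a + μ x b := by rw [hμ, hμ, hμ, TensorProduct.tmul_add, map_add]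
      rw [this]
      exact AddSubmonoid.add_mem _ ha hb

include hμ in
theorem chainJ_eq_bot (n : ℕ)
    (hnil : ∀ f : Fin (n + 1) → A, (∀ i, f i ∈ I) →
      nProd μ (f 0) (List.ofFn fun i : Fin n => f i.succ) = 0) :
    ∀ z ∈ chainJ μ I n, z = 0 := by
  intro z hz
  have h := chainJ_le_products μ I g hμ n hz
  have hsub : {w : A | ∃ f : Fin (n + 1) → A, (∀ i, f i ∈ I) ∧
      w = nProd μ (f 0) (List.ofFn fun i : Fin n => f i.succ)} ⊆ ((⊥ : AddSubmonoid A) : Set A) := by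
    rintro w ⟨f, hf, rfl⟩
    simpa using hnil f hf
  have := (AddSubmonoid.closure_le.2 hsub) h
  simpa using this

end chain

end Aux2


section Aux3

open TensorProduct LinearMap

variable {R H A B : Type*} [CommRing R] [Ring H] [HopfAlgebra R H]
  [Ring A] [Algebra R A] [Ring B] [Algebra R B]

variable (ρ : H →ₐ[R] Module.End R A) (ιA : A →ₐ[R] B) (ψ : H →ₐ[R] B) (J Q : H ⊗[R] H)

/-- The multiplication map `A ⊗ H → B`. -/
def phiMap : A ⊗[R] H →ₗ[R] B :=
  (LinearMap.mul' R B) ∘ₗ (TensorProduct.map ιA.toLinearMap ψ.toLinearMap)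

theorem phiMap_tmul (a : A) (h : H) : phiMap ιA ψ (a ⊗ₜ[R] h) = ιA a * ψ h := by
  simp [phiMap]

/-- The twisted embedding of `A` into `B`, `a ↦ Σ (J¹ • a)·ψ(J²)`. -/
def fMap : A →ₗ[R] B :=
  phiMap ιA ψ ∘ₗ (theta ρ J : Module.End R (A ⊗[R] H)) ∘ₗ
    ((TensorProduct.mk R A H).flip 1)

theorem fMap_apply (a : A) :
    fMap ρ ιA ψ J a = phiMap ιA ψ (theta ρ J (a ⊗ₜ[R] (1 : H))) := rfl

theorem theta_theta (X Y : H ⊗[R] H) (z : A ⊗[R] H) :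
    theta ρ X (theta ρ Y z) = theta ρ (X * Y) z := by
  rw [map_mul, Module.End.mul_eq_comp]; rfl

theorem phi_left (b : A) (x : A ⊗[R] H) :
    ιA b * phiMap ιA ψ x = phiMap ιA ψ (rTensor H (LinearMap.mul R A b) x) := by
  induction x using TensorProduct.induction_on with
  | zero => simp
  | tmul a h => rw [phiMap_tmul, rTensor_tmul, phiMap_tmul, ← mul_assoc, ← map_mul]; simp
  | add x y hx hy => rw [map_add, mul_add, hx, hy, map_add, map_add]

theorem phi_right (g : H) (x : A ⊗[R] H) :
    phiMap ιA ψ x * ψ g = phiMap ιA ψ (lTensor A (Algebra.lmul R H |>.toLinearMap.flip g) x) := by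
  induction x using TensorProduct.induction_on with
  | zero => simp
  | tmul a h =>
    rw [phiMap_tmul, lTensor_tmul, phiMap_tmul, mul_assoc, ← map_mul]
    simp
  | add x y hx hy => rw [map_add, add_mul, hx, hy, map_add, map_add]

theorem mapflip_eq_phi_theta (a : A) (W : H ⊗[R] H) :
    LinearMap.mul' R B
      ((TensorProduct.map (ιA.toLinearMap ∘ₗ (LinearMap.flip ρ.toLinearMap a))
        ψ.toLinearMap) W) = phiMap ιA ψ (theta ρ W (a ⊗ₜ[R] (1 : H))) := by
  induction W using TensorProduct.induction_on with
  | zero => simp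
  | tmul u v => rw [map_tmul, mul'_apply, theta_tmul_apply, phiMap_tmul, mul_one]; rfl
  | add X Y hX hY =>
    simp only [map_add, LinearMap.add_apply, hX, hY]

theorem lTensor_theta (W : H ⊗[R] H) (a : A) (g : H) :
    lTensor A (Algebra.lmul R H |>.toLinearMap.flip g) (theta ρ W (a ⊗ₜ[R] (1 : H))) =
      theta ρ W (a ⊗ₜ[R] g) := by
  induction W using TensorProduct.induction_on with
  | zero => simp
  | tmul u v =>
    rw [theta_tmul_apply, theta_tmul_apply, lTensor_tmul]
    simp [mul_assoc]
  | add X Y hX hY =>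
    simp only [map_add, LinearMap.add_apply, hX, hY]

section WithComm

variable (hcomm : ∀ (h : H) (a : A), ψ h * ιA a =
    LinearMap.mul' R B
      ((TensorProduct.map (ιA.toLinearMap ∘ₗ (LinearMap.flip ρ.toLinearMap a))
        ψ.toLinearMap) (J * Coalgebra.comul (R := R) h * Q)))

include hcomm in
theorem psi_phi (h : H) (x : A ⊗[R] H) :
    ψ h * phiMap ιA ψ x =
      phiMap ιA ψ (theta ρ (J * Coalgebra.comul (R := R) h * Q) x) := by
  induction x using TensorProduct.induction_on with
  | zero => simp
  | tmul a g =>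
    rw [phiMap_tmul, ← mul_assoc, hcomm, mapflip_eq_phi_theta ρ ιA ψ,
      phi_right, lTensor_theta]
  | add x y hx hy => rw [map_add, mul_add, hx, hy, map_add, map_add]

theorem fMap_psi (a : A) (g : H) :
    fMap ρ ιA ψ J a * ψ g = phiMap ιA ψ (theta ρ J (a ⊗ₜ[R] g)) := by
  rw [fMap_apply, phi_right, lTensor_theta]

include hcomm in
theorem psi_fMap (hQJ : Q * J = 1) (h : H) (a : A) :
    ψ h * fMap ρ ιA ψ J a =
      phiMap ιA ψ (theta ρ (J * Coalgebra.comul (R := R) h) (a ⊗ₜ[R] (1 : H))) := by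
  rw [fMap_apply, psi_phi ρ ιA ψ J Q hcomm, theta_theta]
  congr 1
  rw [mul_assoc, mul_assoc, hQJ, mul_one]

include hcomm in
theorem commute_rel_new (hQJ : Q * J = 1) (h : H) (a : A) :
    ψ h * fMap ρ ιA ψ J a =
      LinearMap.mul' R B
        ((TensorProduct.map ((fMap ρ ιA ψ J) ∘ₗ (LinearMap.flip ρ.toLinearMap a))
          ψ.toLinearMap) (Coalgebra.comul (R := R) h)) := by
  rw [psi_fMap ρ ιA ψ J Q hcomm hQJ]
  have key : ∀ W : H ⊗[R] H,
      LinearMap.mul' R B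
        ((TensorProduct.map ((fMap ρ ιA ψ J) ∘ₗ (LinearMap.flip ρ.toLinearMap a))
          ψ.toLinearMap) W) =
      phiMap ιA ψ (theta ρ J (theta ρ W (a ⊗ₜ[R] (1 : H)))) := by
    intro W
    induction W using TensorProduct.induction_on with
    | zero => simp
    | tmul u v =>
      rw [map_tmul, mul'_apply]
      show fMap ρ ιA ψ J (ρ u a) * ψ v = _
      rw [fMap_psi, theta_tmul_apply, mul_one]
    | add X Y hX hY =>
      simp only [map_add, LinearMap.add_apply, hX, hY]
  rw [key, theta_theta]

end WithComm

/-- The twisted multiplication on `A`, as a linear map. -/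
def muHat : A ⊗[R] A →ₗ[R] A :=
  (LinearMap.mul' R A) ∘ₗ pairAction R H A ρ J

section WithAct

variable (hact : ∀ (h : H) (a b : A), ρ h (a * b) =
    LinearMap.mul' R A (pairAction R H A ρ (J * Coalgebra.comul (R := R) h * Q) (a ⊗ₜ[R] b)))

include hact in
theorem act_mul' (h : H) (x : A ⊗[R] A) :
    ρ h (LinearMap.mul' R A x) =
      LinearMap.mul' R A (pairAction R H A ρ (J * Coalgebra.comul (R := R) h * Q) x) := by
  induction x using TensorProduct.induction_on with
  | zero => simp
  | tmul a b => rw [mul'_apply]; exact hact h a b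
  | add x y hx hy => rw [map_add, map_add, map_add, hx, hy, map_add]

include hact in
theorem key_identity (hQJ : Q * J = 1) (h : H) (a b : A) :
    ρ h (muHat ρ J (a ⊗ₜ[R] b)) =
      muHat ρ J (pairAction R H A ρ (Coalgebra.comul (R := R) h) (a ⊗ₜ[R] b)) := by
  show ρ h (LinearMap.mul' R A (pairAction R H A ρ J (a ⊗ₜ[R] b))) = _
  rw [act_mul' ρ J Q hact]
  show _ = LinearMap.mul' R A (pairAction R H A ρ J
    (pairAction R H A ρ (Coalgebra.comul (R := R) h) (a ⊗ₜ[R] b)))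
  rw [← comp_apply (pairAction R H A ρ J), ← pairAction_mul,
    ← comp_apply (pairAction R H A ρ (J * Coalgebra.comul (R := R) h * Q)),
    ← pairAction_mul]
  congr 2
  rw [mul_assoc, mul_assoc, hQJ, mul_one]

theorem mul_eq_muHat (hJQ : J * Q = 1) (x y : A) :
    x * y = muHat ρ J (pairAction R H A ρ Q (x ⊗ₜ[R] y)) := by
  show _ = (LinearMap.mul' R A) (pairAction R H A ρ J (pairAction R H A ρ Q (x ⊗ₜ[R] y)))
  rw [← comp_apply (pairAction R H A ρ J), ← pairAction_mul, hJQ, pairAction_one]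
  simp

end WithAct

end Aux3


section Aux4

open TensorProduct LinearMap

variable {R H A B : Type*} [CommRing R] [Ring H] [HopfAlgebra R H]
  [Ring A] [Algebra R A] [Ring B] [Algebra R B]

variable (ρ : H →ₐ[R] Module.End R A) (ιA : A →ₐ[R] B) (ψ : H →ₐ[R] B) (J Q : H ⊗[R] H)

/-- Evaluation of `theta` at `b ⊗ 1`. -/
def emap (b : A) : H ⊗[R] H →ₗ[R] A ⊗[R] H :=
  (LinearMap.applyₗ (b ⊗ₜ[R] (1 : H))) ∘ₗ (theta ρ).toLinearMap

/-- `u ↦ ((ρ u a) * ·) ⊗ id`. -/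
def l2map (a : A) : H →ₗ[R] ((A ⊗[R] H) →ₗ[R] (A ⊗[R] H)) :=
  (LinearMap.rTensorHom H) ∘ₗ (LinearMap.mul R A) ∘ₗ (LinearMap.flip ρ.toLinearMap a)

/-- The trilinear operation appearing on the left-hand side of the cocycle computation. -/
def bigL (a b : A) : H ⊗[R] (H ⊗[R] H) →ₗ[R] A ⊗[R] H :=
  TensorProduct.lift
    (((LinearMap.llcomp R (H ⊗[R] H) (A ⊗[R] H) (A ⊗[R] H)).flip (emap ρ b)) ∘ₗ (l2map ρ a))

theorem bigL_tmul (a b : A) (u : H) (X : H ⊗[R] H) :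
    bigL ρ a b (u ⊗ₜ[R] X) =
      rTensor H (LinearMap.mul R A (ρ u a)) (theta ρ X (b ⊗ₜ[R] (1 : H))) := rfl

/-- `X ↦ μ(pairAction X (a ⊗ b))`. -/
def m1map (a b : A) : H ⊗[R] H →ₗ[R] A :=
  (LinearMap.mul' R A) ∘ₗ (LinearMap.applyₗ (a ⊗ₜ[R] b)) ∘ₗ (pairAction R H A ρ)

theorem m1map_tmul (a b : A) (u v : H) :
    m1map ρ a b (u ⊗ₜ[R] v) = ρ u a * ρ v b := by
  simp [m1map, pairAction_tmul]

/-- The trilinear operation appearing on the right-hand side of the cocycle computation. -/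
def bigM (a b : A) : (H ⊗[R] H) ⊗[R] H →ₗ[R] A ⊗[R] H := rTensor H (m1map ρ a b)

/-- `h ↦ J · Δ h`. -/
def dmap : H →ₗ[R] H ⊗[R] H :=
  (LinearMap.mulLeft R J) ∘ₗ (Coalgebra.comul (R := R) (A := H))

theorem dmap_apply (h : H) : dmap J h = J * Coalgebra.comul (R := R) h := rfl

theorem bigL_eq_bigM (a b : A) (z : H ⊗[R] (H ⊗[R] H)) :
    bigL ρ a b z = bigM ρ a b ((Algebra.TensorProduct.assoc R R R H H H).symm z) := by
  induction z using TensorProduct.induction_on with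
  | zero => simp
  | add x y hx hy => rw [map_add, map_add, map_add, hx, hy]
  | tmul u X =>
    induction X using TensorProduct.induction_on with
    | zero => simp
    | add X Y hX hY => rw [tmul_add, map_add, map_add, map_add, hX, hY]
    | tmul v w =>
      rw [bigL_tmul, theta_tmul_apply, rTensor_tmul, Algebra.TensorProduct.assoc_symm_tmul]
      show _ = rTensor H (m1map ρ a b) ((u ⊗ₜ[R] v) ⊗ₜ[R] w)
      rw [rTensor_tmul, m1map_tmul, mul_one]
      simp

theorem includeLeft_mul_rTensor (X : H ⊗[R] H) :
    (Algebra.TensorProduct.includeLeft (R := R) (S := R) (A := H ⊗[R] H) (B := H)) J *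
      (rTensor H (Coalgebra.comul (R := R)) X) = rTensor H (dmap J) X := by
  induction X using TensorProduct.induction_on with
  | zero => simp
  | add X Y hX hY => rw [map_add, mul_add, hX, hY, map_add]
  | tmul u v =>
    rw [rTensor_tmul, rTensor_tmul, Algebra.TensorProduct.includeLeft_apply,
      Algebra.TensorProduct.tmul_mul_tmul, one_mul, dmap_apply]

theorem includeRight_mul_lTensor (X : H ⊗[R] H) :
    (Algebra.TensorProduct.includeRight (R := R) (A := H) (B := H ⊗[R] H)) J *
      (lTensor H (Coalgebra.comul (R := R)) X) = lTensor H (dmap J) X := by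
  induction X using TensorProduct.induction_on with
  | zero => simp
  | add X Y hX hY => rw [map_add, mul_add, hX, hY, map_add]
  | tmul u v =>
    rw [lTensor_tmul, lTensor_tmul, Algebra.TensorProduct.includeRight_apply,
      Algebra.TensorProduct.tmul_mul_tmul, one_mul, dmap_apply]

section WithHyp

variable (hcomm : ∀ (h : H) (a : A), ψ h * ιA a =
    LinearMap.mul' R B
      ((TensorProduct.map (ιA.toLinearMap ∘ₗ (LinearMap.flip ρ.toLinearMap a))
        ψ.toLinearMap) (J * Coalgebra.comul (R := R) h * Q)))
  (hact : ∀ (h : H) (a b : A), ρ h (a * b) =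
    LinearMap.mul' R A (pairAction R H A ρ (J * Coalgebra.comul (R := R) h * Q) (a ⊗ₜ[R] b)))
  (hQJ : Q * J = 1)

include hcomm hQJ in
theorem phi_theta_mul_fMap (a b : A) (X : H ⊗[R] H) :
    phiMap ιA ψ (theta ρ X (a ⊗ₜ[R] (1 : H))) * fMap ρ ιA ψ J b =
      phiMap ιA ψ (bigL ρ a b (lTensor H (dmap J) X)) := by
  induction X using TensorProduct.induction_on with
  | zero => simp
  | add X Y hX hY =>
    simp only [map_add, LinearMap.add_apply, add_mul, hX, hY]
  | tmul u v =>
    rw [theta_tmul_apply, mul_one, phiMap_tmul, mul_assoc,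
      psi_fMap ρ ιA ψ J Q hcomm hQJ, phi_left, lTensor_tmul, bigL_tmul, dmap_apply]

include hact hQJ in
theorem theta_muHat_eq (a b : A) (X : H ⊗[R] H) :
    theta ρ X ((muHat ρ J (a ⊗ₜ[R] b)) ⊗ₜ[R] (1 : H)) =
      bigM ρ a b (rTensor H (dmap J) X) := by
  induction X using TensorProduct.induction_on with
  | zero => simp
  | add X Y hX hY => rw [map_add, LinearMap.add_apply, map_add, hX, hY, map_add]
  | tmul u v =>
    rw [theta_tmul_apply, key_identity ρ J Q hact hQJ, mul_one, rTensor_tmul, dmap_apply]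
    show _ = rTensor H (m1map ρ a b) _
    rw [rTensor_tmul]
    congr 1
    show muHat ρ J (pairAction R H A ρ (Coalgebra.comul (R := R) u) (a ⊗ₜ[R] b)) = _
    show (LinearMap.mul' R A) ((pairAction R H A ρ J)
      ((pairAction R H A ρ (Coalgebra.comul (R := R) u)) (a ⊗ₜ[R] b))) = _
    rw [← comp_apply (pairAction R H A ρ J), ← pairAction_mul]
    simp [m1map]

include hcomm hact hQJ in
theorem fMap_mul
    (htw : ((Algebra.TensorProduct.includeLeft (R := R) (S := R) (A := H ⊗[R] H) (B := H)) J) *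
        (LinearMap.rTensor H (Coalgebra.comul (R := R)) J) =
      ((Algebra.TensorProduct.assoc R R R H H H).symm
          ((Algebra.TensorProduct.includeRight (R := R) (A := H) (B := H ⊗[R] H)) J)) *
        ((Algebra.TensorProduct.assoc R R R H H H).symm
          (LinearMap.lTensor H (Coalgebra.comul (R := R)) J)))
    (a b : A) :
    fMap ρ ιA ψ J (muHat ρ J (a ⊗ₜ[R] b)) = fMap ρ ιA ψ J a * fMap ρ ιA ψ J b := by
  have step1 : fMap ρ ιA ψ J a * fMap ρ ιA ψ J b =
      phiMap ιA ψ (bigL ρ a b (lTensor H (dmap J) J)) := by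
    rw [fMap_apply, phi_theta_mul_fMap ρ ιA ψ J Q hcomm hQJ]
  rw [step1, ← includeRight_mul_lTensor, bigL_eq_bigM, map_mul, ← htw,
    includeLeft_mul_rTensor, ← theta_muHat_eq ρ J Q hact hQJ, fMap_apply]

end WithHyp

theorem theta_one_one
    (hone : ∀ h : H, ρ h 1 = algebraMap R A (Coalgebra.counit (R := R) h))
    (X : H ⊗[R] H) :
    theta ρ X ((1 : A) ⊗ₜ[R] (1 : H)) =
      (1 : A) ⊗ₜ[R] (TensorProduct.lid R H (rTensor H (Coalgebra.counit (R := R)) X)) := by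
  induction X using TensorProduct.induction_on with
  | zero => simp
  | add X Y hX hY => rw [map_add, LinearMap.add_apply, map_add, map_add, tmul_add, hX, hY]
  | tmul u v =>
    rw [theta_tmul_apply, hone, mul_one, rTensor_tmul, lid_tmul,
      Algebra.algebraMap_eq_smul_one, TensorProduct.smul_tmul]

theorem fMap_one
    (hone : ∀ h : H, ρ h 1 = algebraMap R A (Coalgebra.counit (R := R) h))
    (hcu : TensorProduct.lid R H (LinearMap.rTensor H (Coalgebra.counit (R := R)) J) = 1) :
    fMap ρ ιA ψ J 1 = 1 := by
  rw [fMap_apply, theta_one_one ρ hone, hcu, phiMap_tmul, map_one, map_one, one_mul]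

theorem theta_bijective (hJQ : J * Q = 1) (hQJ : Q * J = 1) :
    Function.Bijective (theta ρ J : A ⊗[R] H →ₗ[R] A ⊗[R] H) := by
  refine Function.bijective_iff_has_inverse.2 ⟨theta ρ Q, fun z => ?_, fun z => ?_⟩
  · rw [theta_theta, hQJ, map_one, Module.End.one_apply]
  · rw [theta_theta, hJQ, map_one, Module.End.one_apply]

theorem fMap_injective (hbij : Function.Bijective (phiMap ιA ψ))
    (hJQ : J * Q = 1) (hQJ : Q * J = 1) : Function.Injective (fMap ρ ιA ψ J) := by
  intro a b hab
  rw [fMap_apply, fMap_apply] at hab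
  have h1 := hbij.1 hab
  have h2 := congrArg (theta ρ Q) h1
  rw [theta_theta, theta_theta, hQJ, map_one, Module.End.one_apply,
    Module.End.one_apply] at h2
  have h3 := congrArg ((TensorProduct.rid R A) ∘ (lTensor A (Coalgebra.counit (R := R)))) h2
  simpa using h3

theorem mulmap_eq_phi_theta :
    (LinearMap.mul' R B) ∘ₗ (TensorProduct.map (fMap ρ ιA ψ J) ψ.toLinearMap) =
      (phiMap ιA ψ) ∘ₗ (theta ρ J : A ⊗[R] H →ₗ[R] A ⊗[R] H) := by
  apply TensorProduct.ext'
  intro a h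
  simp only [comp_apply, map_tmul, mul'_apply, AlgHom.toLinearMap_apply]
  rw [fMap_psi]

end Aux4


/-- A copy of a type, to carry the twisted algebra structure. -/
def TwistedCopy (A : Type ua) : Type ua := A

/-- The class of strongly semisimple Hopf algebras is closed under
Drinfeld twists: if `H` is strongly semisimple and `J` is a Drinfeld twist for `H`,
then the twisted Hopf algebra `H^J` — here axiomatised as any Hopf algebra `H'` which
coincides with `H` as an algebra (via an algebra isomorphism `φ`), has the same counit,
and has comultiplication `Δ^J = J Δ J⁻¹` — is strongly semisimple. -/
theorem strongly_semisimple_closed_under_drinfeld_twist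
    {R H H' : Type*} [CommRing R] [Ring H] [HopfAlgebra R H] [Ring H']
    [HopfAlgebra R H']
    (J Qinv : H ⊗[R] H) (hJ : IsDrinfeldTwist R H J)
    (hJQ : J * Qinv = 1) (hQJ : Qinv * J = 1)
    (φ : H ≃ₐ[R] H')
    (hcomul : ∀ h : H, Coalgebra.comul (R := R) (φ h) =
      (TensorProduct.map φ.toLinearMap φ.toLinearMap)
        (J * Coalgebra.comul (R := R) h * Qinv))
    (hcounit : ∀ h : H, Coalgebra.counit (R := R) (φ h) = Coalgebra.counit (R := R) h)
    (hH : StronglySemisimple.{ua, ub} R H) :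
    StronglySemisimple.{ua, ub} R H' := by
  classical
  obtain ⟨hJunit, htw, hcu1, hcu2⟩ := hJ
  intro A _ringA _algA ma' hA' B _ringB _algB sp
  let ρ : H →ₐ[R] Module.End R A := ma'.ρ.comp φ.toAlgHom
  let ιA : A →ₐ[R] B := sp.ιA
  let ψ : H →ₐ[R] B := sp.ιH.comp φ.toAlgHom
  -- transported pair action
  have pa_phi : ∀ (X : H ⊗[R] H) (z : A ⊗[R] A),
      pairAction R H' A ma'.ρ ((TensorProduct.map φ.toLinearMap φ.toLinearMap) X) z =
      pairAction R H A ρ X z := by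
    intro X z
    induction X using TensorProduct.induction_on with
    | zero => simp
    | tmul u v => rw [TensorProduct.map_tmul, pairAction_tmul, pairAction_tmul]; rfl
    | add X Y hX hY => simp only [map_add, LinearMap.add_apply, hX, hY]
  have hact : ∀ (h : H) (a b : A), ρ h (a * b) =
      LinearMap.mul' R A (pairAction R H A ρ
        (J * Coalgebra.comul (R := R) h * Qinv) (a ⊗ₜ[R] b)) := by
    intro h a b
    have h1 := ma'.act_mul (φ h) a b
    rw [hcomul, pa_phi] at h1
    exact h1
  have hone : ∀ h : H, ρ h 1 = algebraMap R A (Coalgebra.counit (R := R) h) := by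
    intro h
    have h1 := ma'.act_one (φ h)
    rw [hcounit] at h1
    exact h1
  have hcomm : ∀ (h : H) (a : A), ψ h * ιA a =
      LinearMap.mul' R B
        ((TensorProduct.map (ιA.toLinearMap ∘ₗ (LinearMap.flip ρ.toLinearMap a))
          ψ.toLinearMap) (J * Coalgebra.comul (R := R) h * Qinv)) := by
    intro h a
    have h1 := sp.commute_rel (φ h) a
    rw [hcomul] at h1
    have h2 : ∀ W : H ⊗[R] H,
        (TensorProduct.map (sp.ιA.toLinearMap ∘ₗ (LinearMap.flip ma'.ρ.toLinearMap a))
          sp.ιH.toLinearMap) ((TensorProduct.map φ.toLinearMap φ.toLinearMap) W) =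
        (TensorProduct.map (ιA.toLinearMap ∘ₗ (LinearMap.flip ρ.toLinearMap a))
          ψ.toLinearMap) W := by
      intro W
      induction W using TensorProduct.induction_on with
      | zero => simp
      | tmul u v => simp only [TensorProduct.map_tmul]; rfl
      | add X Y hX hY => simp only [map_add, hX, hY]
    rw [h2] at h1
    exact h1
  have hbij : Function.Bijective (phiMap ιA ψ) := by
    have heq : (phiMap ιA ψ : A ⊗[R] H →ₗ[R] B) =
        ((LinearMap.mul' R B) ∘ₗ
          (TensorProduct.map sp.ιA.toLinearMap sp.ιH.toLinearMap)) ∘ₗ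
          (TensorProduct.congr (LinearEquiv.refl R A) φ.toLinearEquiv).toLinearMap := by
      apply TensorProduct.ext'
      intro a h
      rfl
    rw [heq, LinearMap.coe_comp]
    exact sp.mul_bij.comp (TensorProduct.congr (LinearEquiv.refl R A) φ.toLinearEquiv).bijective
  -- the twisted multiplication
  let μL : A ⊗[R] A →ₗ[R] A := muHat ρ J
  let F : A →ₗ[R] B := fMap ρ ιA ψ J
  have hFmul : ∀ a b : A, F (μL (a ⊗ₜ[R] b)) = F a * F b :=
    fMap_mul ρ ιA ψ J Qinv hcomm hact hQJ htw
  have hFone : F 1 = 1 := fMap_one ρ ιA ψ J hone hcu1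
  have hFinj : Function.Injective F := fMap_injective ρ ιA ψ J Qinv hbij hJQ hQJ
  have hkey : ∀ (h : H) (x y : A), ρ h (μL (x ⊗ₜ[R] y)) =
      μL (pairAction R H A ρ (Coalgebra.comul (R := R) h) (x ⊗ₜ[R] y)) :=
    fun h x y => key_identity ρ J Qinv hact hQJ h x y
  have hmulA : ∀ x y : A, x * y = μL (pairAction R H A ρ Qinv (x ⊗ₜ[R] y)) :=
    mul_eq_muHat ρ J Qinv hJQ
  -- ring structure on the twisted copy
  let mulμ : A → A → A := fun a b => μL (a ⊗ₜ[R] b)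
  letI addAμ : AddCommGroup (TwistedCopy A) := inferInstanceAs (AddCommGroup A)
  letI ringAμ : Ring (TwistedCopy A) :=
    { addAμ with
      mul := (mulμ : TwistedCopy A → TwistedCopy A → TwistedCopy A)
      left_distrib := fun (a b c : A) => by
        show mulμ a (b + c) = mulμ a b + mulμ a c
        show μL (a ⊗ₜ[R] (b + c)) = _
        rw [TensorProduct.tmul_add, map_add]
      right_distrib := fun (a b c : A) => by
        show mulμ (a + b) c = mulμ a c + mulμ b c
        show μL ((a + b) ⊗ₜ[R] c) = _
        rw [TensorProduct.add_tmul, map_add]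
      zero_mul := fun (a : A) => by
        show μL ((0 : A) ⊗ₜ[R] a) = 0
        rw [TensorProduct.zero_tmul, map_zero]
      mul_zero := fun (a : A) => by
        show μL (a ⊗ₜ[R] (0 : A)) = 0
        rw [TensorProduct.tmul_zero, map_zero]
      mul_assoc := fun (a b c : A) => by
        show mulμ (mulμ a b) c = mulμ a (mulμ b c)
        apply hFinj
        show F (μL (μL (a ⊗ₜ[R] b) ⊗ₜ[R] c)) = F (μL (a ⊗ₜ[R] μL (b ⊗ₜ[R] c)))
        rw [hFmul, hFmul, hFmul, hFmul, mul_assoc]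
      one := (1 : A)
      one_mul := fun (a : A) => by
        show mulμ 1 a = a
        apply hFinj
        show F (μL ((1 : A) ⊗ₜ[R] a)) = F a
        rw [hFmul, hFone, one_mul]
      mul_one := fun (a : A) => by
        show mulμ a 1 = a
        apply hFinj
        show F (μL (a ⊗ₜ[R] (1 : A))) = F a
        rw [hFmul, hFone, mul_one] }
  letI modAμ : Module R (TwistedCopy A) := inferInstanceAs (Module R A)
  letI algAμ : Algebra R (TwistedCopy A) :=
    Algebra.ofModule
      (fun (r : R) (x y : A) => by
        show μL ((r • x) ⊗ₜ[R] y) = r • μL (x ⊗ₜ[R] y)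
        rw [← TensorProduct.smul_tmul', map_smul])
      (fun (r : R) (x y : A) => by
        show μL (x ⊗ₜ[R] (r • y)) = r • μL (x ⊗ₜ[R] y)
        rw [TensorProduct.tmul_smul, map_smul])
  let ρμ : H →ₐ[R] Module.End R (TwistedCopy A) := ρ
  let maμ : ModuleAlgebra R H (TwistedCopy A) :=
    { ρ := ρμ
      act_mul := fun h a b => by
        have h1 := hkey h a b
        have h2 : (LinearMap.mul' R (TwistedCopy A)) = (μL : A ⊗[R] A →ₗ[R] A) :=
          TensorProduct.ext' (fun x y => rfl)
        show ρ h (μL (a ⊗ₜ[R] b)) = LinearMap.mul' R (TwistedCopy A)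
          (pairAction R H (TwistedCopy A) ρμ (Coalgebra.comul (R := R) h) (a ⊗ₜ[R] b))
        rw [h2]
        exact h1
      act_one := fun h => by
        show ρ h 1 = algebraMap R (TwistedCopy A) (Coalgebra.counit (R := R) h)
        rw [hone h, Algebra.algebraMap_eq_smul_one, Algebra.algebraMap_eq_smul_one]; rfl }
  -- the twisted copy is H-semiprime
  have hsemi : IsHSemiprime maμ := by
    intro I hI hstab hnil
    obtain ⟨hI0, hIadd, hImul⟩ := hI
    obtain ⟨n, hn⟩ := hnil
    have hμf : ∀ x y : A, mulμ x y = μL (x ⊗ₜ[R] y) := fun _ _ => rfl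
    have hstab' : ∀ h : H, ∀ x ∈ I, ρ h x ∈ I := hstab
    have hkey' : ∀ (h : H) (x y : A), ρ h (mulμ x y) =
        μL (pairAction R H A ρ (Coalgebra.comul (R := R) h) (x ⊗ₜ[R] y)) := hkey
    apply hA' I
    · refine ⟨hI0, hIadd, fun a x hx => ⟨?_, ?_⟩⟩
      · rw [hmulA a x]
        exact pair_mem ρ μL I hI0 hIadd a x
          (fun u v => (hImul (ρ u a) (ρ v x) (hstab' v x hx)).1) Qinv
      · rw [hmulA x a]
        exact pair_mem ρ μL I hI0 hIadd x a
          (fun u v => (hImul (ρ v a) (ρ u x) (hstab' u x hx)).2) Qinv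
    · intro h' x hx
      have h3 : ma'.ρ h' x = ρ (φ.symm h') x := by
        show _ = ma'.ρ (φ (φ.symm h')) x
        rw [AlgEquiv.apply_symm_apply]
      rw [h3]
      exact hstab' _ x hx
    · refine ⟨n, fun f hf => ?_⟩
      have hmem := nProd_mem_chainJ mulμ I ρ μL Qinv hμf hstab' hkey' hmulA n f hf
      exact chainJ_eq_bot mulμ I μL hμf n (fun g hg => hn g hg) _ hmem
  -- the smash product structure on B over H
  let FAlg : TwistedCopy A →ₐ[R] B :=
    AlgHom.ofLinearMap (F : TwistedCopy A →ₗ[R] B) hFone (fun x y => hFmul x y)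
  let sp' : SmashProductStructure R H (TwistedCopy A) maμ B :=
    { ιA := FAlg
      ιH := ψ
      mul_bij := by
        have heq : ((LinearMap.mul' R B) ∘ₗ
            (TensorProduct.map FAlg.toLinearMap ψ.toLinearMap)) =
            ((phiMap ιA ψ) ∘ₗ (theta ρ J : A ⊗[R] H →ₗ[R] A ⊗[R] H)) :=
          mulmap_eq_phi_theta ρ ιA ψ J
        rw [heq]
        exact hbij.comp (theta_bijective ρ J Qinv hJQ hQJ)
      commute_rel := fun h a => commute_rel_new ρ ιA ψ J Qinv hcomm hQJ h a }
  exact hH (TwistedCopy A) maμ hsemi B sp'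

end
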